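/- Let S be a finite semigroup that is a left regular band of groups, with idempotent-power map ω. Then for all s, t ∈ S one has ω(s·t) ∼ (ω s)·(ω t). (Equivalently, on the quotient T = S/∼ the map T ↦ T^ω is a semigroup morphism: supp((st)^ω) = supp(s^ω)·supp(t^ω).) -/
import Mathlib


/-- The support relation `s ∼ t` on a left regular band of groups:
`(ω s)·t = s` and `(ω t)·s = t`. -/
def LRBGsim {S : Type*} [Mul S] (ω : S → S) (s t : S) : Prop :=
  ω s * t = s ∧ ω t * s = t

private lemma lrbg_iter_succ {S : Type*} [Semigroup S] (x : S) (n : ℕ) :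
    (fun t => t * x)^[n + 1] x = (fun t => t * x)^[n] x * x := by
  rw [Function.iterate_succ_apply']

private lemma lrbg_iter_front {S : Type*} [Semigroup S] (x : S) (n : ℕ) :
    (fun t => t * x)^[n + 1] x = x * (fun t => t * x)^[n] x := by
  induction n with
  | zero => simp
  | succ n ih => rw [lrbg_iter_succ x (n + 1), ih, mul_assoc, ← lrbg_iter_succ x n, ih]

/-- In a finite LRBG, `(s·t)^ω ∼ s^ω·t^ω` for all `s, t`;
equivalently, on the quotient `S/∼` the map `T ↦ T^ω` is a semigroup morphism. -/
theorem lrbg_omega_of_mul_sim {S : Type*} [Semigroup S] [Fintype S] (ω : S → S)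
    (hidem : ∀ s : S, ω s * ω s = ω s)
    (hpow : ∀ s : S, ∃ n : ℕ, ω s = (fun t => t * s)^[n] s)
    (lrbg1 : ∀ s : S, ω s * s = s)
    (lrbg2 : ∀ s t : S, s * t * ω s = s * t) :
    ∀ s t : S, LRBGsim ω (ω (s * t)) (ω s * ω t) := by
  -- any idempotent is fixed by ω
  have omega_fix : ∀ x : S, x * x = x → ω x = x := by
    intro x hx
    obtain ⟨n, hn⟩ := hpow x
    rw [hn]; clear hn
    induction n with
    | zero => simp
    | succ n ih => rw [lrbg_iter_succ, ih, hx]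
  -- x * ω x = x
  have xomega : ∀ x : S, x * ω x = x := by
    intro x
    obtain ⟨n, hn⟩ := hpow x
    have h1 : ω x * x = x := lrbg1 x
    have h2 : x * ω x = ω x * x := by
      rw [hn]
      cases n with
      | zero => simp
      | succ n => rw [← lrbg_iter_front, ← lrbg_iter_succ]
    rw [h2, h1]
  intro s t
  obtain ⟨k, hk⟩ := hpow (s * t)
  have hωe : ω (ω (s * t)) = ω (s * t) := omega_fix _ (hidem (s * t))
  -- ω(st) absorbs ω s on the right
  have eωs : ω (s * t) * ω s = ω (s * t) := by
    obtain ⟨r, hr⟩ : ∃ r : S, (fun u => u * (s * t))^[k] (s * t) = s * r := by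
      cases k with
      | zero => exact ⟨t, by simp⟩
      | succ k =>
          exact ⟨t * (fun u => u * (s * t))^[k] (s * t),
            by rw [lrbg_iter_front, mul_assoc]⟩
    rw [hk, hr]
    exact lrbg2 s r
  -- ω(st) absorbs ω t on the right
  have eωt : ω (s * t) * ω t = ω (s * t) := by
    obtain ⟨r, hr⟩ : ∃ r : S, (fun u => u * (s * t))^[k] (s * t) = r * t := by
      cases k with
      | zero => exact ⟨s, by simp⟩
      | succ k =>
          exact ⟨(fun u => u * (s * t))^[k] (s * t) * s,
            by rw [lrbg_iter_succ, ← mul_assoc]⟩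
    rw [hk, hr, mul_assoc, xomega t]
  constructor
  · -- ω(ω(st)) * (ωs * ωt) = ω(st)
    rw [hωe, ← mul_assoc, eωs, eωt]
  · -- ω(ωs * ωt) * ω(st) = ωs * ωt
    have hωωs : ω (ω s) = ω s := omega_fix _ (hidem s)
    have hf : (ω s * ω t) * (ω s * ω t) = ω s * ω t := by
      have h1 : ω s * ω t * ω (ω s) = ω s * ω t := lrbg2 (ω s) (ω t)
      rw [hωωs] at h1
      rw [← mul_assoc, h1, mul_assoc, hidem t]
    rw [omega_fix _ hf]
    obtain ⟨a, ha⟩ := hpow s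
    obtain ⟨b, hb⟩ := hpow t
    cases b with
    | zero =>
      simp only [Function.iterate_zero, id_eq] at hb
      cases a with
      | zero =>
        simp only [Function.iterate_zero, id_eq] at ha
        rw [ha, hb]
        exact xomega (s * t)
      | succ a =>
        rw [ha, hb, lrbg_iter_succ,
          mul_assoc ((fun u => u * s)^[a] s) s t,
          mul_assoc ((fun u => u * s)^[a] s) (s * t) (ω (s * t)),
          xomega (s * t)]
    | succ b =>
      rw [hb, lrbg_iter_front t b]
      cases a with
      | zero =>
        simp only [Function.iterate_zero, id_eq] at ha
        rw [ha, ← mul_assoc s t ((fun u => u * t)^[b] t)]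
        exact lrbg2 (s * t) _
      | succ a =>
        rw [ha, lrbg_iter_succ,
          mul_assoc ((fun u => u * s)^[a] s) s (t * (fun u => u * t)^[b] t),
          ← mul_assoc s t ((fun u => u * t)^[b] t),
          mul_assoc ((fun u => u * s)^[a] s) (s * t * (fun u => u * t)^[b] t) (ω (s * t)),
          lrbg2 (s * t) ((fun u => u * t)^[b] t)]
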